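/- Every orientation-preserving homeomorphism g of ℝ satisfying g(x) > x for all x admits an n-th root for every n ≥ 2: there exists an orientation-preserving homeomorphism f of ℝ with fⁿ = g. -/

import Mathlib

open Function

section Aux

variable (g : ℝ → ℝ) (hgb : Function.Bijective g)

/-- g as a permutation of ℝ. -/
noncomputable def gPerm : Equiv.Perm ℝ := Equiv.ofBijective g hgb

lemma gPerm_apply (x : ℝ) : gPerm g hgb x = g x := rfl

lemma g_symm_apply (x : ℝ) : g ((gPerm g hgb).symm x) = x := (gPerm g hgb).apply_symm_apply x

lemma gPerm_symm_strictMono (hg : StrictMono g) : StrictMono ⇑(gPerm g hgb).symm := by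
  intro x y hxy
  have hx : g ((gPerm g hgb).symm x) = x := (gPerm g hgb).apply_symm_apply x
  have hy : g ((gPerm g hgb).symm y) = y := (gPerm g hgb).apply_symm_apply y
  have : g ((gPerm g hgb).symm x) < g ((gPerm g hgb).symm y) := by rw [hx, hy]; exact hxy
  exact hg.lt_iff_lt.mp this

lemma gPerm_zpow_strictMono (hg : StrictMono g) (k : ℤ) : StrictMono ⇑(gPerm g hgb ^ k) := by
  induction k using Int.induction_on with
  | zero => simpa using strictMono_id
  | succ k ih =>
    have h : gPerm g hgb ^ ((k : ℤ) + 1) = gPerm g hgb ^ (k : ℤ) * gPerm g hgb :=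
      zpow_add_one _ _
    rw [h]
    intro x y hxy
    simpa [Equiv.Perm.mul_apply, gPerm_apply] using ih (hg hxy)
  | pred k ih =>
    have h : gPerm g hgb ^ (-(k : ℤ) - 1) = gPerm g hgb ^ (-(k : ℤ)) * (gPerm g hgb)⁻¹ :=
      zpow_sub_one _ _
    rw [h]
    intro x y hxy
    have := gPerm_symm_strictMono g hgb hg hxy
    simpa [Equiv.Perm.mul_apply, Equiv.Perm.inv_def] using ih this

lemma gPerm_zpow_succ (k : ℤ) (x : ℝ) :
    (gPerm g hgb ^ (k + 1)) x = g ((gPerm g hgb ^ k) x) := by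
  have h : gPerm g hgb ^ (k + 1) = gPerm g hgb * gPerm g hgb ^ k := by
    rw [add_comm, zpow_add, zpow_one]
  rw [h, Equiv.Perm.mul_apply, gPerm_apply]

lemma gPerm_zpow_succ' (k : ℤ) (x : ℝ) :
    (gPerm g hgb ^ (k + 1)) x = (gPerm g hgb ^ k) (g x) := by
  have h : gPerm g hgb ^ (k + 1) = gPerm g hgb ^ k * gPerm g hgb := zpow_add_one _ _
  rw [h, Equiv.Perm.mul_apply, gPerm_apply]

/-- The orbit of 0. -/
noncomputable def orb (k : ℤ) : ℝ := (gPerm g hgb ^ k) 0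

lemma orb_strictMono (hg : StrictMono g) (hfix : ∀ x : ℝ, g x > x) : StrictMono (orb g hgb) := by
  apply strictMono_int_of_lt_succ
  intro k
  have h : orb g hgb (k + 1) = (gPerm g hgb ^ k) (g 0) := gPerm_zpow_succ' g hgb k 0
  rw [h]
  exact gPerm_zpow_strictMono g hgb hg k (hfix 0)

lemma exists_orb_gt (hg : StrictMono g) (hfix : ∀ x : ℝ, g x > x) (y : ℝ) : ∃ k : ℤ, y < orb g hgb k := by
  by_contra hcon
  push_neg at hcon
  have hne : (Set.range (orb g hgb)).Nonempty := ⟨orb g hgb 0, ⟨0, rfl⟩⟩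
  have hbdd : BddAbove (Set.range (orb g hgb)) := ⟨y, by rintro _ ⟨k, rfl⟩; exact hcon k⟩
  set L := sSup (Set.range (orb g hgb)) with hL
  have hLle : ∀ k, orb g hgb k ≤ L := fun k => le_csSup hbdd ⟨k, rfl⟩
  have hsL : (gPerm g hgb).symm L < L := by
    have := hfix ((gPerm g hgb).symm L)
    rwa [g_symm_apply g hgb L] at this
  obtain ⟨_, ⟨k, rfl⟩, hk⟩ := exists_lt_of_lt_csSup hne hsL
  have h1 : orb g hgb (k + 1) = g (orb g hgb k) := gPerm_zpow_succ g hgb k 0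
  have h2 : g ((gPerm g hgb).symm L) < g (orb g hgb k) := hg hk
  rw [g_symm_apply g hgb L] at h2
  exact absurd (hLle (k + 1)) (by rw [h1]; exact not_le.mpr h2)

lemma exists_orb_le (hg : StrictMono g) (hfix : ∀ x : ℝ, g x > x) (y : ℝ) : ∃ k : ℤ, orb g hgb k ≤ y := by
  by_contra hcon
  push_neg at hcon
  have hne : (Set.range (orb g hgb)).Nonempty := ⟨orb g hgb 0, ⟨0, rfl⟩⟩
  have hbdd : BddBelow (Set.range (orb g hgb)) := ⟨y, by rintro _ ⟨k, rfl⟩; exact (hcon k).le⟩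
  set M := sInf (Set.range (orb g hgb)) with hM
  have hMle : ∀ k, M ≤ orb g hgb k := fun k => csInf_le hbdd ⟨k, rfl⟩
  have hgM : M < g M := hfix M
  obtain ⟨_, ⟨k, rfl⟩, hk⟩ := exists_lt_of_csInf_lt hne hgM
  have h1 : orb g hgb k = g (orb g hgb (k - 1)) := by
    have := gPerm_zpow_succ g hgb (k - 1) 0
    rw [sub_add_cancel] at this
    exact this
  rw [h1] at hk
  have := hg.lt_iff_lt.mp hk
  exact absurd (hMle (k - 1)) (not_le.mpr this)

lemma exists_orb_floor (hg : StrictMono g) (hfix : ∀ x : ℝ, g x > x) (y : ℝ) :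
    ∃ k : ℤ, orb g hgb k ≤ y ∧ y < orb g hgb (k + 1) := by
  obtain ⟨K, hK⟩ := exists_orb_gt g hgb hg hfix y
  obtain ⟨k₀, hk₀⟩ := exists_orb_le g hgb hg hfix y
  have hbdd : ∀ z : ℤ, orb g hgb z ≤ y → z ≤ K := by
    intro z hz
    by_contra hzz
    push_neg at hzz
    exact absurd hz (not_le.mpr (lt_of_lt_of_le hK
      ((orb_strictMono g hgb hg hfix).monotone hzz.le)))
  obtain ⟨k, hk, hmax⟩ := Int.exists_greatest_of_bdd ⟨K, hbdd⟩ ⟨k₀, hk₀⟩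
  refine ⟨k, hk, ?_⟩
  by_contra hcon
  push_neg at hcon
  have := hmax (k + 1) hcon
  omega

end Aux

theorem exists_nth_root_of_fixedPointFree (g : ℝ → ℝ)
    (hg : StrictMono g) (hgb : Function.Bijective g)
    (hfix : ∀ x : ℝ, g x > x) (n : ℕ) (hn : 2 ≤ n) :
    ∃ f : ℝ → ℝ, StrictMono f ∧ Function.Bijective f ∧ f^[n] = g := by
  classical
  set c : ℝ := g 0 with hc
  have hc0 : 0 < c := hfix 0
  set ψ : ℝ → ℝ := fun t => (gPerm g hgb ^ ⌊t⌋) (Int.fract t * c) with hψ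
  -- bounds
  have hψ_lb : ∀ t, orb g hgb ⌊t⌋ ≤ ψ t := by
    intro t
    have h0 : (0 : ℝ) ≤ Int.fract t * c := mul_nonneg (Int.fract_nonneg t) hc0.le
    exact (gPerm_zpow_strictMono g hgb hg ⌊t⌋).monotone h0
  have hψ_ub : ∀ t, ψ t < orb g hgb (⌊t⌋ + 1) := by
    intro t
    have h1 : Int.fract t * c < c := by
      nlinarith [Int.fract_lt_one t, Int.fract_nonneg t]
    have h2 : orb g hgb (⌊t⌋ + 1) = (gPerm g hgb ^ ⌊t⌋) c := gPerm_zpow_succ' g hgb ⌊t⌋ 0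
    rw [h2]
    exact gPerm_zpow_strictMono g hgb hg ⌊t⌋ h1
  have hψ_mono : StrictMono ψ := by
    intro s t hst
    rcases eq_or_lt_of_le (Int.floor_le_floor hst.le) with hfl | hfl
    · have hfr : Int.fract s < Int.fract t := by
        unfold Int.fract
        rw [hfl]
        linarith
      have := gPerm_zpow_strictMono g hgb hg ⌊t⌋ (mul_lt_mul_of_pos_right hfr hc0)
      simpa [hψ, hfl] using this
    · calc ψ s < orb g hgb (⌊s⌋ + 1) := hψ_ub s
        _ ≤ orb g hgb ⌊t⌋ := (orb_strictMono g hgb hg hfix).monotone (by omega)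
        _ ≤ ψ t := hψ_lb t
  have hψ_surj : Function.Surjective ψ := by
    intro y
    obtain ⟨k, h1, h2⟩ := exists_orb_floor g hgb hg hfix y
    set z : ℝ := ((gPerm g hgb ^ k)⁻¹) y with hz
    have hzy : (gPerm g hgb ^ k) z = y := Equiv.apply_symm_apply _ y
    have hz0 : 0 ≤ z := by
      have := (gPerm_zpow_strictMono g hgb hg k).le_iff_le (a := 0) (b := z)
      rw [hzy] at this
      exact this.mp h1
    have hzc : z < c := by
      have hk1 : orb g hgb (k + 1) = (gPerm g hgb ^ k) c := gPerm_zpow_succ' g hgb k 0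
      rw [hk1] at h2
      have := (gPerm_zpow_strictMono g hgb hg k).lt_iff_lt (a := z) (b := c)
      rw [hzy] at this
      exact this.mp h2
    refine ⟨z / c + k, ?_⟩
    have hfrac : ⌊z / c⌋ = 0 := by
      rw [Int.floor_eq_zero_iff]
      constructor
      · exact div_nonneg hz0 hc0.le
      · rw [div_lt_one hc0]; exact hzc
    have hfl : ⌊z / c + (k : ℝ)⌋ = k := by
      rw [Int.floor_add_intCast, hfrac, zero_add]
    have hfr : Int.fract (z / c + (k : ℝ)) = z / c := by
      rw [Int.fract_add_intCast, Int.fract_eq_self.mpr ⟨div_nonneg hz0 hc0.le,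
        (div_lt_one hc0).mpr hzc⟩]
    show (gPerm g hgb ^ ⌊z / c + (k:ℝ)⌋) (Int.fract (z / c + (k:ℝ)) * c) = y
    rw [hfl, hfr, div_mul_cancel₀ _ hc0.ne', hzy]
  have hψ_comm : ∀ t, ψ (t + 1) = g (ψ t) := by
    intro t
    have hfl : ⌊t + 1⌋ = ⌊t⌋ + 1 := by
      rw [Int.floor_add_one]
    have hfr : Int.fract (t + 1) = Int.fract t := Int.fract_add_one t
    show (gPerm g hgb ^ ⌊t + 1⌋) (Int.fract (t + 1) * c) = g (ψ t)
    rw [hfl, hfr, gPerm_zpow_succ]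
  set E : ℝ ≃ ℝ := Equiv.ofBijective ψ ⟨hψ_mono.injective, hψ_surj⟩ with hE
  have hEapp : ∀ t, E t = ψ t := fun t => rfl
  have hEsymm_mono : StrictMono ⇑E.symm := by
    intro x y hxy
    have hx : ψ (E.symm x) = x := E.apply_symm_apply x
    have hy : ψ (E.symm y) = y := E.apply_symm_apply y
    have : ψ (E.symm x) < ψ (E.symm y) := by rw [hx, hy]; exact hxy
    exact hψ_mono.lt_iff_lt.mp this
  set F : ℝ ≃ ℝ := E.symm.trans ((Equiv.addRight ((n : ℝ)⁻¹)).trans E) with hF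
  have hFapp : ∀ x, F x = ψ (E.symm x + (n : ℝ)⁻¹) := fun x => rfl
  refine ⟨⇑F, ?_, F.bijective, ?_⟩
  · intro x y hxy
    rw [hFapp, hFapp]
    exact hψ_mono (by linarith [hEsymm_mono hxy])
  · have key : ∀ (m : ℕ) (x : ℝ), (⇑F)^[m] x = ψ (E.symm x + (m : ℝ) * (n : ℝ)⁻¹) := by
      intro m
      induction m with
      | zero =>
        intro x
        have h0 : E.symm x + (0 : ℕ) * (n : ℝ)⁻¹ = E.symm x := by push_cast; ring
        rw [Function.iterate_zero_apply, h0]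
        exact (E.apply_symm_apply x).symm
      | succ m ih =>
        intro x
        rw [Function.iterate_succ_apply', ih, hFapp]
        have hsy : E.symm (ψ (E.symm x + (m : ℝ) * (n : ℝ)⁻¹))
            = E.symm x + (m : ℝ) * (n : ℝ)⁻¹ := E.symm_apply_apply _
        rw [hsy]
        congr 1
        push_cast
        ring
    funext x
    rw [key n x]
    have hn0 : (n : ℝ) ≠ 0 := by positivity
    rw [mul_inv_cancel₀ hn0, hψ_comm]
    exact congrArg g (E.apply_symm_apply x)
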